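/- Let X be a real-valued random variable with mean μ and variance σ² > 0, and let t < μ. Then the conditional expectation satisfies E[X | X ≥ t] ≤ μ + σ²/(μ − t), provided P(X ≥ t) > 0. -/

import Mathlib

open MeasureTheory

theorem stmt0 (P : Measure ℝ) [IsProbabilityMeasure P]
    (m v t : ℝ)
    (hX : Integrable (fun x => x) P)
    (hX2 : Integrable (fun x => x ^ 2) P)
    (hmean : ∫ x, x ∂P = m)
    (hvar : ∫ x, (x - m) ^ 2 ∂P = v)
    (hv : 0 < v) (ht : t < m)
    (hpos : 0 < (P {x : ℝ | t ≤ x}).toReal) :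
    (∫ x in {x : ℝ | t ≤ x}, x ∂P) / (P {x : ℝ | t ≤ x}).toReal ≤ m + v / (m - t) := by
  have hS : MeasurableSet {x : ℝ | t ≤ x} := measurableSet_Ici
  have hSc : MeasurableSet {x : ℝ | t ≤ x}ᶜ := hS.compl
  set S := {x : ℝ | t ≤ x} with hSdef
  set p := (P S).toReal with hp
  set q := (P Sᶜ).toReal with hq
  have hq0 : 0 ≤ q := ENNReal.toReal_nonneg
  have hpq : p + q = 1 := by
    rw [hp, hq, ← ENNReal.toReal_add (measure_ne_top P S) (measure_ne_top P Sᶜ),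
      measure_add_measure_compl hS]
    simp
  -- f = x - m
  have hf : Integrable (fun x => x - m) P := hX.sub (integrable_const m)
  have hf2 : Integrable (fun x => (x - m) ^ 2) P := by
    have : (fun x : ℝ => (x - m) ^ 2) = fun x => x ^ 2 - (2 * m) * x + m ^ 2 := by
      funext x; ring
    rw [this]
    exact (hX2.sub (hX.const_mul (2 * m))).add (integrable_const _)
  have hfint : ∫ x, (x - m) ∂P = 0 := by
    rw [integral_sub hX (integrable_const m), hmean, integral_const]
    simp
  set s := ∫ x in S, (x - m) ∂P with hs
  have hsplit : ∫ x in S, (x - m) ∂P + ∫ x in Sᶜ, (x - m) ∂P = 0 := by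
    rw [integral_add_compl hS hf, hfint]
  have hScint : ∫ x in Sᶜ, (x - m) ∂P = -s := by linarith
  -- s ≥ (m - t) * q
  have hsq : (m - t) * q ≤ s := by
    have hmono : ∫ x in Sᶜ, (x - m) ∂P ≤ ∫ x in Sᶜ, (t - m) ∂P := by
      apply setIntegral_mono_on hf.integrableOn (integrableOn_const (measure_ne_top P _) enorm_ne_top) hSc
      intro x hx
      have : ¬ t ≤ x := hx
      linarith [lt_of_not_ge this]
    rw [hScint, setIntegral_const] at hmono
    have : P.real Sᶜ • (t - m) = q * (t - m) := by rw [smul_eq_mul, measureReal_def]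
    rw [this] at hmono
    nlinarith
  -- Cauchy-Schwarz: p*q*s^2 ≤ (p*q)^2 * v
  have hindf : Integrable (Sᶜ.indicator (fun x => x - m)) P := hf.indicator hSc
  have hindfint : ∫ x, Sᶜ.indicator (fun x => x - m) x ∂P = -s := by
    rw [integral_indicator hSc]; exact hScint
  have hind1 : Integrable (Sᶜ.indicator (fun _ => (1:ℝ))) P := (integrable_const 1).indicator hSc
  have hind1int : ∫ x, Sᶜ.indicator (fun _ => (1:ℝ)) x ∂P = q := by
    rw [integral_indicator hSc, setIntegral_const, smul_eq_mul, mul_one, measureReal_def]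
  clear_value s p q
  set c := p * q with hc
  have hkey : 0 ≤ (p*q)^2 * v - (p*q) * s^2 := by
    have hGeq : (fun x => (c * (x - m) + s * (Sᶜ.indicator (fun _ => (1:ℝ)) x - q)) ^ 2)
        = fun x => c^2 * (x - m)^2 + (2*c*s) * Sᶜ.indicator (fun y => y - m) x
          + (-(2*c*s*q)) * (x - m) + (s^2*(1-2*q)) * Sᶜ.indicator (fun _ => (1:ℝ)) x
          + s^2*q^2 := by
      funext x
      by_cases hx : x ∈ Sᶜ
      · simp only [Set.indicator_of_mem hx]; ring
      · simp only [Set.indicator_of_notMem hx]; ring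
    have hnn : 0 ≤ ∫ x, (c * (x - m) + s * (Sᶜ.indicator (fun _ => (1:ℝ)) x - q)) ^ 2 ∂P :=
      integral_nonneg fun x => sq_nonneg _
    rw [hGeq] at hnn
    have hI1 : Integrable (fun x => c^2 * (x - m)^2
        + (2*c*s) * Sᶜ.indicator (fun y => y - m) x) P :=
      (hf2.const_mul _).add (hindf.const_mul _)
    have hI2 : Integrable (fun x => c^2 * (x - m)^2
        + (2*c*s) * Sᶜ.indicator (fun y => y - m) x + (-(2*c*s*q)) * (x - m)) P :=
      hI1.add (hf.const_mul _)
    have hI3 : Integrable (fun x => c^2 * (x - m)^2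
        + (2*c*s) * Sᶜ.indicator (fun y => y - m) x + (-(2*c*s*q)) * (x - m)
        + (s^2*(1-2*q)) * Sᶜ.indicator (fun _ => (1:ℝ)) x) P :=
      hI2.add (hind1.const_mul _)
    rw [integral_add hI3 (integrable_const _),
      integral_add hI2 (hind1.const_mul _),
      integral_add hI1 (hf.const_mul _),
      integral_add (hf2.const_mul _) (hindf.const_mul _),
      integral_const_mul, integral_const_mul, integral_const_mul, integral_const_mul,
      hvar, hindfint, hfint, hind1int, integral_const] at hnn
    simp only [probReal_univ, ENNReal.toReal_one, smul_eq_mul, one_mul] at hnn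
    have hqp : s^2*(q - q^2) = s^2*(p*q) := by
      have h1 : p = 1 - q := by linarith
      rw [h1]; ring
    rw [hc] at hnn
    nlinarith [hnn, hqp]
  -- integral over S of x
  have hSx : ∫ x in S, x ∂P = s + m * p := by
    have : ∫ x in S, x ∂P = ∫ x in S, ((x - m) + m) ∂P := by
      apply setIntegral_congr_fun hS; intro x _; ring
    rw [this, integral_add hf.integrableOn (integrableOn_const (measure_ne_top P _) enorm_ne_top),
      setIntegral_const, smul_eq_mul, measureReal_def, ← hs, ← hp]
    ring
  rw [hSx, div_le_iff₀ hpos]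
  -- suffices: (m - t) * s ≤ p * v
  have ha : (0:ℝ) < m - t := by linarith
  have hmain : (m - t) * s ≤ p * v := by
    rcases eq_or_lt_of_le hq0 with hq1 | hq1
    · -- q = 0, so s = 0
      have hPSc : P Sᶜ = 0 := by
        have := (ENNReal.toReal_eq_zero_iff _).1 (show (P Sᶜ).toReal = 0 by rw [← hq]; exact hq1.symm)
        rcases this with h | h
        · exact h
        · exact absurd h (measure_ne_top P Sᶜ)
      have : ∫ x in Sᶜ, (x - m) ∂P = 0 := by
        rw [Measure.restrict_eq_zero.2 hPSc]; exact integral_zero_measure _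
      have hs0 : s = 0 := by linarith
      rw [hs0, mul_zero]
      positivity
    · -- q > 0
      have hcs : s^2 ≤ p * q * v := by nlinarith [hkey, mul_pos hpos hq1]
      have hspos : 0 < s := lt_of_lt_of_le (by positivity) hsq
      nlinarith [mul_le_mul_of_nonneg_right hsq (le_of_lt hspos)]
  have hfin : s ≤ v / (m - t) * p := by
    rw [div_mul_eq_mul_div, le_div_iff₀ ha]
    nlinarith [hmain]
  nlinarith [hfin]
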